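/- Lower bound from Newton's inequality: for μ ∈ ℝ^n, i ∈ {1,…,n−1}, with M = σ_k(μ) and σ_{k-1}(μ|n) > 0, one has σ_{k-1}(μ|i) ≥ (1/σ_{k-1}(μ|n)) · { [1 − (k−1)(n−k−1)/(k(n−k))] (σ_{k-1}(μ|i,n))² + σ_{k-2}(μ|i,n) M }. -/

import Mathlib

open Finset

noncomputable def esym {n : ℕ} (s : Finset (Fin n)) (μ : Fin n → ℝ) (k : ℕ) : ℝ :=
  ∑ t ∈ s.powersetCard k, ∏ j ∈ t, μ j

open Polynomial in
lemma aux_splits_derivative (p : ℝ[X]) (hp : p.Splits) :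
    (derivative p).Splits := by
  by_cases h0 : derivative p = 0
  · rw [h0]; exact Splits.zero
  have hnd : p.natDegree ≠ 0 := fun h => h0 (derivative_of_natDegree_zero h)
  rw [splits_iff_card_roots] at hp ⊢
  have h1 := p.card_roots_le_derivative
  have h2 := (derivative p).card_roots'
  have h3 : (derivative p).natDegree < p.natDegree := natDegree_derivative_lt hnd
  omega

open Polynomial in
lemma aux_splits_iterate (p : ℝ[X]) (hp : p.Splits) (k : ℕ) :
    (derivative^[k] p).Splits := by
  induction k with
  | zero => exact hp
  | succ d ih => rw [Function.iterate_succ_apply']; exact aux_splits_derivative _ ih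

open Polynomial in
lemma aux_splits_reverse (p : ℝ[X]) (hp : p.Splits) :
    p.reverse.Splits := by
  by_cases h0 : p = 0
  · rw [h0, reverse_zero]; exact Splits.zero
  have key : ∀ s : Multiset ℝ, ((s.map fun r => X - C r).prod).reverse.Splits := by
    intro s
    induction s using Multiset.induction_on with
    | empty =>
        simp only [Multiset.map_zero, Multiset.prod_zero]
        rw [← C_1, reverse_C]
        exact Splits.C _
    | cons r s ih =>
        rw [Multiset.map_cons, Multiset.prod_cons, reverse_mul_of_domain]
        exact Splits.mul (Splits.of_natDegree_le_one
          (le_trans (reverse_natDegree_le _) (natDegree_X_sub_C r).le)) ih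
  have hprod := Splits.eq_prod_roots hp
  rw [hprod, reverse_mul_of_domain, reverse_C]
  exact Splits.mul (Splits.C _) (key _)

open Polynomial in
lemma aux_discrim (p : ℝ[X]) (hdeg : p.natDegree ≤ 2) (hp : p.Splits) :
    4 * (p.coeff 2 * p.coeff 0) ≤ (p.coeff 1) ^ 2 := by
  by_cases h2 : p.coeff 2 = 0
  · rw [h2]; nlinarith [sq_nonneg (p.coeff 1)]
  have hp0 : p ≠ 0 := fun h => h2 (by simp [h])
  have hd : p.natDegree = 2 := le_antisymm hdeg (le_natDegree_of_ne_zero h2)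
  have hroots : p.roots ≠ 0 := by
    rw [splits_iff_card_roots] at hp
    intro h
    rw [h] at hp
    simp [hd] at hp
  obtain ⟨x, hx⟩ := Multiset.exists_mem_of_ne_zero hroots
  have hroot : p.IsRoot x := (mem_roots hp0).1 hx
  have heval : p.coeff 0 + p.coeff 1 * x + p.coeff 2 * x ^ 2 = 0 := by
    have h := hroot
    rw [IsRoot, eval_eq_sum_range, hd] at h
    rw [Finset.sum_range_succ, Finset.sum_range_succ, Finset.sum_range_succ] at h
    simp only [Finset.range_zero, Finset.sum_empty, pow_zero, mul_one, pow_one] at h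
    linarith
  have h4 : p.coeff 2 * (p.coeff 0 + p.coeff 1 * x + p.coeff 2 * x ^ 2) = 0 := by
    rw [heval]; ring
  nlinarith [sq_nonneg (2 * p.coeff 2 * x + p.coeff 1), h4]

open Polynomial in
lemma newton_esym {n : ℕ} (S : Finset (Fin n)) (μ : Fin n → ℝ) (t e : ℕ)
    (hcard : S.card = t + e + 2) :
    ((t : ℝ) + 2) * ((e : ℝ) + 2) * (esym S μ t * esym S μ (t + 2)) ≤
      ((t : ℝ) + 1) * ((e : ℝ) + 1) * (esym S μ (t + 1)) ^ 2 := by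
  classical
  set m := t + e + 2 with hm
  set p : ℝ[X] := ∏ a ∈ S, (X + C (μ a)) with hpdef
  have hsplit : p.Splits :=
    Splits.prod fun a _ => Splits.of_natDegree_le_one (natDegree_X_add_C _).le
  have hmonic : p.Monic := monic_prod_of_monic _ _ fun a _ => monic_X_add_C _
  have hdegp : p.natDegree = m := by
    rw [hpdef, natDegree_prod _ _ fun a _ => (monic_X_add_C (μ a)).ne_zero]
    simp [natDegree_X_add_C, hcard]
  have hcoeff : ∀ u : ℕ, u ≤ m → p.coeff u = esym S μ (m - u) := by
    intro u hu
    rw [hpdef, Finset.prod_X_add_C_coeff S μ (by omega : u ≤ S.card)]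
    rw [esym, hcard]
  have hcm : p.coeff m = 1 := by
    have := hmonic.coeff_natDegree
    rwa [hdegp] at this
  -- q := e-th derivative of p
  set q : ℝ[X] := derivative^[e] p with hq
  have hqsplit : q.Splits := aux_splits_iterate p hsplit e
  have hqc : ∀ s : ℕ, q.coeff s = ((s + e).descFactorial e : ℝ) * p.coeff (s + e) := by
    intro s; rw [hq, Polynomial.coeff_iterate_derivative, nsmul_eq_mul]
  have hqtop : q.coeff (t + 2) ≠ 0 := by
    rw [hqc, show t + 2 + e = m by omega, hcm, mul_one]
    have : m.descFactorial e ≠ 0 := by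
      rw [Ne, Nat.descFactorial_eq_zero_iff_lt]; omega
    exact_mod_cast this
  have hqdeg : q.natDegree = t + 2 := by
    refine le_antisymm ?_ (Polynomial.le_natDegree_of_ne_zero hqtop)
    have h := Polynomial.natDegree_iterate_derivative p e
    rw [← hq, hdegp] at h; omega
  -- r := reverse of q
  set r : ℝ[X] := q.reverse with hr
  have hrsplit : r.Splits := aux_splits_reverse q hqsplit
  have hrc : ∀ s : ℕ, s ≤ t + 2 → r.coeff s = q.coeff (t + 2 - s) := by
    intro s hs
    rw [hr, Polynomial.coeff_reverse, hqdeg, Polynomial.revAt_le hs]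
  -- w := t-th derivative of r
  set w : ℝ[X] := derivative^[t] r with hw
  have hwsplit : w.Splits := aux_splits_iterate r hrsplit t
  have hwdeg : w.natDegree ≤ 2 := by
    have h1 := Polynomial.natDegree_iterate_derivative r t
    rw [← hw] at h1
    have h2 : r.natDegree ≤ t + 2 := by
      rw [hr]; exact le_trans (Polynomial.reverse_natDegree_le q) (le_of_eq hqdeg)
    omega
  have hwc : ∀ s : ℕ, w.coeff s = ((s + t).descFactorial t : ℝ) * r.coeff (s + t) := by
    intro s; rw [hw, Polynomial.coeff_iterate_derivative, nsmul_eq_mul]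
  have hquad := aux_discrim w hwdeg hwsplit
  -- named natural number coefficients
  set a0 := (2 + e).descFactorial e with ha0def
  set a1 := (1 + e).descFactorial e with ha1def
  set a2 := e.descFactorial e with ha2def
  set b0 := t.descFactorial t with hb0def
  set b1 := (1 + t).descFactorial t with hb1def
  set b2 := (2 + t).descFactorial t with hb2def
  have hw0 : w.coeff 0 = (b0 : ℝ) * ((a0 : ℝ) * esym S μ t) := by
    rw [hwc, zero_add, hrc t (by omega), show t + 2 - t = 2 by omega, hqc,
      hcoeff (2 + e) (by omega), show m - (2 + e) = t by omega]
  have hw1 : w.coeff 1 = (b1 : ℝ) * ((a1 : ℝ) * esym S μ (t + 1)) := by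
    rw [hwc, hrc (1 + t) (by omega), show t + 2 - (1 + t) = 1 by omega, hqc,
      hcoeff (1 + e) (by omega), show m - (1 + e) = t + 1 by omega]
  have hw2 : w.coeff 2 = (b2 : ℝ) * ((a2 : ℝ) * esym S μ (t + 2)) := by
    rw [hwc, hrc (2 + t) (by omega), show t + 2 - (2 + t) = 0 by omega, hqc,
      hcoeff (0 + e) (by omega), show m - (0 + e) = t + 2 by omega, zero_add]
  rw [hw0, hw1, hw2] at hquad
  -- factorial identities
  have ha2 : a2 = e.factorial := Nat.descFactorial_self e
  have hb0 : b0 = t.factorial := Nat.descFactorial_self t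
  have ha1 : a1 = (1 + e).factorial := by
    have h := Nat.factorial_mul_descFactorial (show e ≤ 1 + e by omega)
    rw [show 1 + e - e = 1 by omega] at h
    simpa [Nat.factorial] using h
  have hb1 : b1 = (1 + t).factorial := by
    have h := Nat.factorial_mul_descFactorial (show t ≤ 1 + t by omega)
    rw [show 1 + t - t = 1 by omega] at h
    simpa [Nat.factorial] using h
  have ha0 : 2 * a0 = (2 + e).factorial := by
    have h := Nat.factorial_mul_descFactorial (show e ≤ 2 + e by omega)
    rw [show 2 + e - e = 2 by omega] at h
    simpa [Nat.factorial] using h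
  have hb2 : 2 * b2 = (2 + t).factorial := by
    have h := Nat.factorial_mul_descFactorial (show t ≤ 2 + t by omega)
    rw [show 2 + t - t = 2 by omega] at h
    simpa [Nat.factorial] using h
  have hkey : 4 * b2 * a0 * (a2 * b0) * ((t + 1) * (e + 1)) =
      (b1 * a1) ^ 2 * ((t + 2) * (e + 2)) := by
    have hfe : (2 + e).factorial = (2 + e) * ((1 + e) * e.factorial) := by
      rw [show 2 + e = (1 + e) + 1 by omega, Nat.factorial_succ,
        show 1 + e = e + 1 by omega, Nat.factorial_succ]
    have hft : (2 + t).factorial = (2 + t) * ((1 + t) * t.factorial) := by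
      rw [show 2 + t = (1 + t) + 1 by omega, Nat.factorial_succ,
        show 1 + t = t + 1 by omega, Nat.factorial_succ]
    have hfe1 : (1 + e).factorial = (1 + e) * e.factorial := by
      rw [show 1 + e = e + 1 by omega, Nat.factorial_succ]
    have hft1 : (1 + t).factorial = (1 + t) * t.factorial := by
      rw [show 1 + t = t + 1 by omega, Nat.factorial_succ]
    have calc1 : (2 * b2) * (2 * a0) * (a2 * b0) * ((t + 1) * (e + 1)) =
        4 * b2 * a0 * (a2 * b0) * ((t + 1) * (e + 1)) := by ring
    have calc2 : (2 * b2) * (2 * a0) * (a2 * b0) * ((t + 1) * (e + 1)) =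
        (b1 * a1) ^ 2 * ((t + 2) * (e + 2)) := by
      rw [hb2, ha0, ha2, hb0, hb1, ha1, hfe, hft, hfe1, hft1]
      ring_nf
    omega
  have hkeyR : (4 : ℝ) * (b2 : ℝ) * (a0 : ℝ) * ((a2 : ℝ) * (b0 : ℝ)) *
      (((t : ℝ) + 1) * ((e : ℝ) + 1)) =
      ((b1 : ℝ) * (a1 : ℝ)) ^ 2 * (((t : ℝ) + 2) * ((e : ℝ) + 2)) := by
    exact_mod_cast congrArg (Nat.cast : ℕ → ℝ) hkey
  have hFpos : (0 : ℝ) < ((b1 : ℝ) * (a1 : ℝ)) ^ 2 := by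
    have h1 : b1 ≠ 0 := by rw [hb1]; exact (Nat.factorial_pos _).ne'
    have h2 : a1 ≠ 0 := by rw [ha1]; exact (Nat.factorial_pos _).ne'
    have h1' : (0:ℝ) < (b1 : ℝ) := by exact_mod_cast Nat.pos_of_ne_zero h1
    have h2' : (0:ℝ) < (a1 : ℝ) := by exact_mod_cast Nat.pos_of_ne_zero h2
    positivity
  refine le_of_mul_le_mul_left ?_ hFpos
  have hte : (0 : ℝ) ≤ ((t : ℝ) + 1) * ((e : ℝ) + 1) := by positivity
  calc ((b1 : ℝ) * (a1 : ℝ)) ^ 2 * (((t : ℝ) + 2) * ((e : ℝ) + 2) *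
        (esym S μ t * esym S μ (t + 2)))
      = (((t : ℝ) + 1) * ((e : ℝ) + 1)) *
        (4 * ((b2 : ℝ) * ((a2 : ℝ) * esym S μ (t + 2)) *
          ((b0 : ℝ) * ((a0 : ℝ) * esym S μ t)))) := by
        linear_combination (-(esym S μ t * esym S μ (t + 2))) * hkeyR
    _ ≤ (((t : ℝ) + 1) * ((e : ℝ) + 1)) *
        (((b1 : ℝ) * ((a1 : ℝ) * esym S μ (t + 1))) ^ 2) := by
        exact mul_le_mul_of_nonneg_left hquad hte
    _ = ((b1 : ℝ) * (a1 : ℝ)) ^ 2 *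
        (((t : ℝ) + 1) * ((e : ℝ) + 1) * esym S μ (t + 1) ^ 2) := by ring

lemma esym_insert {n : ℕ} (S : Finset (Fin n)) (μ : Fin n → ℝ) {x : Fin n} (hx : x ∉ S)
    (j : ℕ) :
    esym (insert x S) μ (j + 1) = esym S μ (j + 1) + μ x * esym S μ j := by
  classical
  unfold esym
  have hdisj : Disjoint (S.powersetCard (j + 1))
      ((S.powersetCard j).image (insert x)) := by
    rw [Finset.disjoint_left]
    intro u hu hu2
    obtain ⟨v, hv, rfl⟩ := Finset.mem_image.1 hu2
    exact hx ((Finset.mem_powersetCard.1 hu).1 (Finset.mem_insert_self x v))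
  rw [Finset.powersetCard_succ_insert hx, Finset.sum_union hdisj]
  congr 1
  rw [Finset.sum_image]
  · rw [Finset.mul_sum]
    refine Finset.sum_congr rfl fun u hu => ?_
    have hu' : x ∉ u := fun h => hx ((Finset.mem_powersetCard.1 hu).1 h)
    rw [Finset.prod_insert hu']
  · intro u hu v hv huv
    have hu' : x ∉ u := fun h => hx ((Finset.mem_powersetCard.1 hu).1 h)
    have hv' : x ∉ v := fun h => hx ((Finset.mem_powersetCard.1 hv).1 h)
    rw [← Finset.erase_insert hu', ← Finset.erase_insert hv', huv]

lemma esym_eq_zero {n : ℕ} (S : Finset (Fin n)) (μ : Fin n → ℝ) (j : ℕ) (h : S.card < j) :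
    esym S μ j = 0 := by
  unfold esym
  rw [Finset.powersetCard_eq_empty.2 h, Finset.sum_empty]

lemma final_alg (E0 E1 E2 x y c : ℝ) (hnewt : E0 * E2 ≤ (1 - c) * E1 ^ 2) :
    c * E1 ^ 2 + E0 * ((E2 + y * E1) + x * (E1 + y * E0)) ≤
      (E1 + x * E0) * (E1 + y * E0) := by nlinarith [hnewt]

theorem stmt8 (n k : ℕ) (hn : 3 ≤ n) (hk : 2 ≤ k) (hkn : k ≤ n - 1)
    (μ : Fin n → ℝ) (lst : Fin n) (hlst : (lst : ℕ) = n - 1)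
    (i : Fin n) (hi : i ≠ lst)
    (hpos : 0 < esym (Finset.univ.erase lst) μ (k - 1)) :
    esym (Finset.univ.erase i) μ (k - 1) ≥
      (1 / esym (Finset.univ.erase lst) μ (k - 1)) *
        ((1 - (((k : ℝ) - 1) * ((n : ℝ) - (k : ℝ) - 1)) / ((k : ℝ) * ((n : ℝ) - (k : ℝ))))
            * (esym ((Finset.univ.erase i).erase lst) μ (k - 1)) ^ 2
          + esym ((Finset.univ.erase i).erase lst) μ (k - 2) * esym Finset.univ μ k) := by
  classical
  obtain ⟨a, rfl⟩ : ∃ a, k = a + 2 := ⟨k - 2, by omega⟩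
  have hk1 : a + 2 - 1 = a + 1 := rfl
  have hk2 : a + 2 - 2 = a := rfl
  simp only [hk1, hk2] at hpos ⊢
  set S := (Finset.univ.erase i).erase lst with hS
  have hlstmem : lst ∈ Finset.univ.erase i := Finset.mem_erase.2 ⟨Ne.symm hi, Finset.mem_univ _⟩
  have himem : i ∈ Finset.univ.erase lst := Finset.mem_erase.2 ⟨hi, Finset.mem_univ _⟩
  have hlstS : lst ∉ S := Finset.notMem_erase _ _
  have hiS : i ∉ S := fun h =>
    (Finset.notMem_erase i Finset.univ) (Finset.mem_of_mem_erase h)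
  have hT : Finset.univ.erase i = insert lst S := (Finset.insert_erase hlstmem).symm
  have hU : Finset.univ.erase lst = insert i S := by
    have h1 : (Finset.univ.erase lst).erase i = S := by
      rw [hS, Finset.erase_right_comm]
    rw [← h1]
    exact (Finset.insert_erase himem).symm
  have hUniv : (Finset.univ : Finset (Fin n)) = insert i (insert lst S) := by
    rw [← hT]
    exact (Finset.insert_erase (Finset.mem_univ i)).symm
  have hiT : i ∉ insert lst S := by
    rw [← hT]; exact Finset.notMem_erase _ _
  have hcardS : S.card = n - 2 := by
    rw [hS, Finset.card_erase_of_mem hlstmem, Finset.card_erase_of_mem (Finset.mem_univ i),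
      Finset.card_univ, Fintype.card_fin]
    omega
  set E0 := esym S μ a with hE0
  set E1 := esym S μ (a + 1) with hE1
  set E2 := esym S μ (a + 2) with hE2
  have hA : esym (Finset.univ.erase i) μ (a + 1) = E1 + μ lst * E0 := by
    rw [hT, esym_insert S μ hlstS a]
  have hB : esym (Finset.univ.erase lst) μ (a + 1) = E1 + μ i * E0 := by
    rw [hU, esym_insert S μ hiS a]
  have hM : esym Finset.univ μ (a + 2) =
      (E2 + μ lst * E1) + μ i * (E1 + μ lst * E0) := by
    rw [hUniv, esym_insert _ μ hiT (a + 1), esym_insert S μ hlstS (a + 1),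
      esym_insert S μ hlstS a]
  rw [hB] at hpos
  rw [ge_iff_le, hA, hB, hM, one_div, inv_mul_le_iff₀ hpos]
  refine final_alg E0 E1 E2 (μ i) (μ lst) _ ?_
  -- remains : E0 * E2 ≤ (1 - c) * E1 ^ 2
  by_cases hcase : a + 4 ≤ n
  · obtain ⟨e, he⟩ : ∃ e, n = a + e + 4 := ⟨n - a - 4, by omega⟩
    have hnew := newton_esym S μ a e (by omega)
    rw [← hE0, ← hE1, ← hE2] at hnew
    have hnR : ((n : ℕ) : ℝ) = (a : ℝ) + (e : ℝ) + 4 := by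
      rw [he]; push_cast; ring
    have hco : (1 : ℝ) - (1 - ((((a + 2 : ℕ) : ℝ)) - 1) * (((n : ℕ) : ℝ) -
        (((a + 2 : ℕ) : ℝ)) - 1) / ((((a + 2 : ℕ) : ℝ)) * (((n : ℕ) : ℝ) -
        (((a + 2 : ℕ) : ℝ))))) =
        (((a : ℝ) + 1) * ((e : ℝ) + 1)) / (((a : ℝ) + 2) * ((e : ℝ) + 2)) := by
      rw [hnR]
      push_cast
      ring_nf
    rw [hco]
    have hden : (0 : ℝ) < ((a : ℝ) + 2) * ((e : ℝ) + 2) := by positivity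
    rw [div_mul_eq_mul_div, le_div_iff₀ hden]
    nlinarith [hnew]
  · have hn3 : n = a + 3 := by omega
    have hE2zero : E2 = 0 := by
      rw [hE2]
      exact esym_eq_zero S μ (a + 2) (by omega)
    rw [hE2zero, mul_zero]
    have hnR : ((n : ℕ) : ℝ) = (a : ℝ) + 3 := by
      rw [hn3]; push_cast; ring
    have hco : (1 : ℝ) - (1 - ((((a + 2 : ℕ) : ℝ)) - 1) * (((n : ℕ) : ℝ) -
        (((a + 2 : ℕ) : ℝ)) - 1) / ((((a + 2 : ℕ) : ℝ)) * (((n : ℕ) : ℝ) -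
        (((a + 2 : ℕ) : ℝ))))) = 0 := by
      rw [hnR]
      push_cast
      ring_nf
    rw [hco, zero_mul]
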